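/- Let n ≥ 3 be an integer and let ω, ω′ be arbitrary positive real numbers (playing the roles of the volumes ω_n, ω_{n−1} of the n- and (n−1)-dimensional unit spheres). For j = 1, …, m define d_j = [2(β_j − α_j)P_j/(ω′(n−2))]^{1/(n−2)} and b_j = [(β_j − α_j)P_j/(ω α_j)]^{1/n}, and then set σ_j = ((n−2)/2)·d_j^{n−2}·ω′/(b_j^n·ω) and ρ_j = b_j^n·ω. Then for every j = 1, …, m one has σ_j = α_j and ρ_j = (β_j − α_j)P_j/α_j, and for every k = 1, …, m one has 1 + ∑_{j=1}^m σ_j ρ_j/(σ_j − β_k) = 0; that is, each β_k is a root of the function 𝓕(λ) = 1 + ∑_{j=1}^m σ_j ρ_j/(σ_j − λ). -/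

import Mathlib

/-!
STATEMENT 0: For n ≥ 3, arbitrary positive ω, ω′, and intervals (α_j, β_j)
satisfying the ordering conditions, the choices d_j, b_j give σ_j = α_j,
ρ_j = (β_j − α_j)P_j/α_j, and each β_k is a root of
𝓕(λ) = 1 + ∑_j σ_j ρ_j/(σ_j − λ).
-/

theorem gaps_parameters_choice_higher_dim
    (m : ℕ) (hm : 1 ≤ m) (n : ℕ) (hn : 3 ≤ n)
    (ω ω' : ℝ) (hω : 0 < ω) (hω' : 0 < ω')
    (α β : ℕ → ℝ)
    (hα0 : 0 < α 0)
    (hαβ : ∀ j, j < m → α j < β j)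
    (hβα : ∀ j, j + 1 < m → β j < α (j + 1))
    (P d b σ ρ : ℕ → ℝ)
    (hP : ∀ j, P j = ∏ i ∈ (Finset.range m).erase j, (β i - α j) / (α i - α j))
    (hd : ∀ j, d j =
      (2 * (β j - α j) * P j / (ω' * ((n : ℝ) - 2))) ^ ((1 : ℝ) / ((n : ℝ) - 2)))
    (hb : ∀ j, b j = ((β j - α j) * P j / (ω * α j)) ^ ((1 : ℝ) / (n : ℝ)))
    (hσ : ∀ j, σ j = (((n : ℝ) - 2) / 2) * (d j ^ ((n : ℝ) - 2)) * ω' / ((b j ^ (n : ℝ)) * ω))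
    (hρ : ∀ j, ρ j = b j ^ (n : ℝ) * ω) :
    (∀ j, j < m → σ j = α j ∧ ρ j = (β j - α j) * P j / α j) ∧
    (∀ k, k < m → 1 + ∑ j ∈ Finset.range m, σ j * ρ j / (σ j - β k) = 0) := by
  have hn3 : (3:ℝ) ≤ (n:ℝ) := by exact_mod_cast hn
  have hn2 : (0:ℝ) < (n:ℝ) - 2 := by linarith
  have hn0 : ((n:ℝ)) ≠ 0 := by positivity
  -- strict monotonicity of α on range m
  have hlt : ∀ j, j < m → ∀ i, i < j → α i < α j := by
    intro j hj
    induction j with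
    | zero => intro i hi; omega
    | succ p ih =>
      intro i hi
      have h1 : α p < α (p + 1) := lt_trans (hαβ p (by omega)) (hβα p hj)
      rcases Nat.lt_succ_iff_lt_or_eq.mp hi with h | h
      · exact lt_trans (ih (by omega) i h) h1
      · subst h; exact h1
  have hβlt : ∀ i j, i < j → j < m → β i < α j := by
    intro i j hij hj
    have h1 : β i < α (i + 1) := hβα i (by omega)
    rcases Nat.lt_or_ge (i+1) j with h | h
    · exact lt_trans h1 (hlt j hj (i+1) h)
    · have : i + 1 = j := by omega
      subst this; exact h1
  have hαpos : ∀ j, j < m → 0 < α j := by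
    intro j hj
    rcases Nat.eq_zero_or_pos j with h | h
    · subst h; exact hα0
    · exact lt_trans hα0 (hlt j hj 0 h)
  have hPpos : ∀ j, j < m → 0 < P j := by
    intro j hj
    rw [hP j]
    apply Finset.prod_pos
    intro i hi
    rw [Finset.mem_erase, Finset.mem_range] at hi
    rcases lt_or_gt_of_ne hi.1 with h | h
    · -- i < j
      apply div_pos_of_neg_of_neg
      · have := hβlt i j h hj; linarith
      · have := hlt j hj i h; linarith
    · -- j < i
      apply div_pos
      · have h1 := hlt i hi.2 j h
        have h2 := hαβ i hi.2
        linarith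
      · have := hlt i hi.2 j h; linarith
  have hcpos : ∀ j, j < m → 0 < (β j - α j) * P j := by
    intro j hj
    exact mul_pos (by have := hαβ j hj; linarith) (hPpos j hj)
  -- Part 1
  have part1 : ∀ j, j < m → σ j = α j ∧ ρ j = (β j - α j) * P j / α j := by
    intro j hj
    have he : 0 < (β j - α j) * P j := hcpos j hj
    have hαj : 0 < α j := hαpos j hj
    have he2 : (0:ℝ) < 2 * (β j - α j) * P j := by nlinarith [he]
    have hbn : b j ^ (n:ℝ) = (β j - α j) * P j / (ω * α j) := by
      rw [hb j, ← Real.rpow_mul (le_of_lt (div_pos he (by positivity))), one_div,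
        inv_mul_cancel₀ hn0, Real.rpow_one]
    have hdn : d j ^ ((n:ℝ) - 2) = 2 * (β j - α j) * P j / (ω' * ((n:ℝ) - 2)) := by
      rw [hd j, ← Real.rpow_mul (le_of_lt (div_pos he2 (by positivity))), one_div,
        inv_mul_cancel₀ (ne_of_gt hn2), Real.rpow_one]
    constructor
    · rw [hσ j, hdn, hbn]
      have hne : (β j - α j) * P j ≠ 0 := ne_of_gt he
      field_simp
      exact div_self hne
    · rw [hρ j, hbn]
      field_simp
  refine ⟨part1, ?_⟩
  -- Part 2
  intro k hk
  have hβkne : ∀ i, i < m → β k - α i ≠ 0 := by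
    intro i hi
    rcases lt_trichotomy i k with h | h | h
    · have h1 := hlt k hk i h
      have h2 := hαβ k hk
      intro hc; linarith
    · subst h; have := hαβ i hi; intro hc; linarith
    · have := hβlt k i h hi; intro hc; linarith
  have hinj : Set.InjOn α (Finset.range m) := by
    intro x hx y hy hxy
    simp only [Finset.coe_range, Set.mem_Iio] at hx hy
    rcases lt_trichotomy x y with h | h | h
    · exact absurd hxy (ne_of_lt (hlt y hy x h))
    · exact h
    · exact absurd hxy.symm (ne_of_lt (hlt x hx y h))
  classical
  set s : Finset ℕ := Finset.range m with hs
  set g : Polynomial ℝ := ∏ i ∈ s, (Polynomial.X - Polynomial.C (α i)) with hg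
  set h : Polynomial ℝ := ∏ i ∈ s, (Polynomial.X - Polynomial.C (β i)) with hh
  have hmg : g.Monic := Polynomial.monic_prod_of_monic _ _ fun i _ => Polynomial.monic_X_sub_C _
  have hmh : h.Monic := Polynomial.monic_prod_of_monic _ _ fun i _ => Polynomial.monic_X_sub_C _
  have hdh : h.natDegree = s.card := by
    rw [hh, Polynomial.natDegree_prod_of_monic _ _ fun i _ => Polynomial.monic_X_sub_C _]
    simp [Polynomial.natDegree_X_sub_C]
  have hdg : g.natDegree = s.card := by
    rw [hg, Polynomial.natDegree_prod_of_monic _ _ fun i _ => Polynomial.monic_X_sub_C _]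
    simp [Polynomial.natDegree_X_sub_C]
  have hdeq : h.degree = g.degree := by
    rw [Polynomial.degree_eq_natDegree hmh.ne_zero,
      Polynomial.degree_eq_natDegree hmg.ne_zero, hdh, hdg]
  have hdeg : (h - g).degree < (s.card : WithBot ℕ) := by
    have := Polynomial.degree_sub_lt hdeq hmh.ne_zero
      (hmh.leadingCoeff.trans hmg.leadingCoeff.symm)
    rwa [Polynomial.degree_eq_natDegree hmh.ne_zero, hdh] at this
  have hfe := Lagrange.eq_interpolate hinj hdeg
  have KEY := congrArg (Polynomial.eval (β k)) hfe
  simp only [hg, hh, Lagrange.interpolate_apply, Lagrange.basis, Lagrange.basisDivisor,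
    Polynomial.eval_sub, Polynomial.eval_prod, Polynomial.eval_finset_sum, Polynomial.eval_mul,
    Polynomial.eval_X, Polynomial.eval_C] at KEY
  have hks : k ∈ s := Finset.mem_range.mpr hk
  have hz1 : ∏ i ∈ s, (β k - β i) = 0 :=
    Finset.prod_eq_zero hks (by ring)
  rw [hz1, zero_sub] at KEY
  have KEY2 : -∏ i ∈ s, (β k - α i) =
      ∑ j ∈ s, (∏ i ∈ s, (α j - β i)) *
        ∏ i ∈ s.erase j, ((α j - α i)⁻¹ * (β k - α i)) := by
    rw [KEY]
    apply Finset.sum_congr rfl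
    intro j hj
    have hz2 : ∏ i ∈ s, (α j - α i) = 0 := Finset.prod_eq_zero hj (by ring)
    rw [hz2, sub_zero]
  -- term-wise identity
  have hterm : ∀ j ∈ s, (β j - α j) * P j / (α j - β k) * ∏ i ∈ s, (β k - α i) =
      (∏ i ∈ s, (α j - β i)) * ∏ i ∈ s.erase j, ((α j - α i)⁻¹ * (β k - α i)) := by
    intro j hj
    have hjm : j < m := Finset.mem_range.mp hj
    have hE : ∏ i ∈ s, (α j - β i) = (α j - β j) * ∏ i ∈ s.erase j, (α j - β i) :=
      (Finset.mul_prod_erase s _ hj).symm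
    have hG : ∏ i ∈ s, (β k - α i) = (β k - α j) * ∏ i ∈ s.erase j, (β k - α i) :=
      (Finset.mul_prod_erase s _ hj).symm
    have h1 : (∏ i ∈ s.erase j, (α j - β i)) *
        (∏ i ∈ s.erase j, ((α j - α i)⁻¹ * (β k - α i))) =
        (∏ i ∈ s.erase j, ((β i - α j) / (α i - α j))) *
        ∏ i ∈ s.erase j, (β k - α i) := by
      rw [← Finset.prod_mul_distrib, ← Finset.prod_mul_distrib]
      refine Finset.prod_congr rfl fun i hi => ?_
      rw [div_eq_mul_inv, show α i - α j = -(α j - α i) by ring,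
        show β i - α j = -(α j - β i) by ring, inv_neg]
      ring
    rw [hE, hG, hP j, mul_assoc, h1]
    have hne : α j - β k ≠ 0 := by
      have := hβkne j hjm; intro hc; apply this; linarith
    have hA : (∏ i ∈ s.erase j, (α i - α j)) ≠ 0 := by
      refine Finset.prod_ne_zero_iff.mpr fun i hi => ?_
      rw [Finset.mem_erase, Finset.mem_range] at hi
      rcases lt_or_gt_of_ne hi.1 with h' | h'
      · exact ne_of_lt (by have := hlt j hjm i h'; linarith)
      · exact ne_of_gt (by have := hlt i hi.2 j h'; linarith)
    field_simp
    ring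
  have hGne : (∏ i ∈ s, (β k - α i)) ≠ 0 :=
    Finset.prod_ne_zero_iff.mpr fun i hi => hβkne i (Finset.mem_range.mp hi)
  have hsum : (∑ j ∈ s, (β j - α j) * P j / (α j - β k)) * ∏ i ∈ s, (β k - α i) =
      -∏ i ∈ s, (β k - α i) := by
    rw [Finset.sum_mul, KEY2]
    exact Finset.sum_congr rfl hterm
  have hsum2 : ∑ j ∈ s, (β j - α j) * P j / (α j - β k) = -1 := by
    have h1 : (∑ j ∈ s, (β j - α j) * P j / (α j - β k)) * ∏ i ∈ s, (β k - α i) =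
        (-1) * ∏ i ∈ s, (β k - α i) := by rw [hsum]; ring
    exact mul_right_cancel₀ hGne h1
  have heq : ∀ j ∈ s, σ j * ρ j / (σ j - β k) = (β j - α j) * P j / (α j - β k) := by
    intro j hj
    have hjm : j < m := Finset.mem_range.mp hj
    obtain ⟨hσj, hρj⟩ := part1 j hjm
    have hαj : α j ≠ 0 := ne_of_gt (hαpos j hjm)
    rw [hσj, hρj, mul_div_cancel₀ _ hαj]
  rw [Finset.sum_congr rfl heq, hsum2]
  ring
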